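/- arXiv:1512.01399 — 2 statements merged into one kernel-verified Lean document; each statement's English description precedes it below -/
import Mathlib

section
/- Let λ ∈ [0, (n-1)²/4] and r = (n-1)/2 + (n-1)/2·√(1 - 4λ/(n-1)²). Then there exist d₀ > 0 and C₃ > 0 and a solution h : (0,∞) → ℝ of the ODE h''(d) + (n-1)·tanh(d)·h'(d) = -λ·h(d) such that h is positive and decreasing on [d₀, ∞) and h(d) < C₃·e^{-r·d} for all d > d₀. -/
open Real Filter

namespace HypEig

noncomputable def Dd (ν lam : ℝ) : ℝ := Real.sqrt (ν^2 - 4*lam)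
noncomputable def rr (ν lam : ℝ) : ℝ := (ν + Dd ν lam)/2

noncomputable def mexp (ν lam : ℝ) : ℕ := ⌈(2*ν+lam) + (2*ν+lam)^2⌉₊

noncomputable def aa (ν lam : ℝ) : ℕ → ℝ
  | 0 => 1
  | k+1 => -(aa ν lam k) * ((rr ν lam + 2*k)^2 + ν*(rr ν lam + 2*k) + lam)
      / ((2*k+2)*(2*k+2 + Dd ν lam))

variable {ν lam : ℝ}

lemma Dd_nonneg : 0 ≤ Dd ν lam := Real.sqrt_nonneg _

lemma Dd_sq (h4 : 4*lam ≤ ν^2) : (Dd ν lam)^2 = ν^2 - 4*lam :=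
  Real.sq_sqrt (by nlinarith)

lemma Dd_le (h0 : 0 ≤ lam) (hν : 1 ≤ ν) : Dd ν lam ≤ ν := by
  have : Dd ν lam ≤ Real.sqrt (ν^2) := Real.sqrt_le_sqrt (by nlinarith)
  rwa [Real.sqrt_sq (by linarith)] at this

lemma rr_ge : ν/2 ≤ rr ν lam := by
  have := Dd_nonneg (ν := ν) (lam := lam); unfold rr; linarith

lemma rr_le (h0 : 0 ≤ lam) (hν : 1 ≤ ν) : rr ν lam ≤ ν := by
  have := Dd_le h0 hν; unfold rr; linarith

lemma rr_pos (hν : 1 ≤ ν) : 0 < rr ν lam := lt_of_lt_of_le (by linarith) rr_ge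

lemma rr_root (h4 : 4*lam ≤ ν^2) : (rr ν lam)^2 - ν * rr ν lam + lam = 0 := by
  have h := Dd_sq (ν := ν) (lam := lam) h4
  unfold rr; nlinarith [h]

lemma P_eval (h4 : 4*lam ≤ ν^2) (x : ℝ) :
    (rr ν lam + x)^2 - ν * (rr ν lam + x) + lam = x * (x + Dd ν lam) := by
  have h := rr_root (ν := ν) (lam := lam) h4
  have h2 : Dd ν lam = 2 * rr ν lam - ν := by unfold rr; ring
  linear_combination h - x * h2

lemma den_pos (k : ℕ) : 0 < ((2*(k:ℝ)+2)*(2*(k:ℝ)+2 + Dd ν lam)) := by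
  have := Dd_nonneg (ν := ν) (lam := lam)
  positivity

lemma aa_rec (k : ℕ) :
    aa ν lam (k+1) * ((2*(k:ℝ)+2)*(2*(k:ℝ)+2 + Dd ν lam))
      + aa ν lam k * ((rr ν lam + 2*k)^2 + ν*(rr ν lam + 2*k) + lam) = 0 := by
  have h := den_pos (ν := ν) (lam := lam) k
  show (-(aa ν lam k) * ((rr ν lam + 2*k)^2 + ν*(rr ν lam + 2*k) + lam)
      / ((2*(k:ℝ)+2)*(2*(k:ℝ)+2 + Dd ν lam))) * _ + _ = 0
  rw [div_mul_cancel₀ _ (ne_of_gt h)]; ring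

lemma mexp_ge (hν : 1 ≤ ν) (h0 : 0 ≤ lam) :
    (2*ν+lam) + (2*ν+lam)^2 ≤ (mexp ν lam : ℝ) := Nat.le_ceil _

lemma aa_abs (hν : 1 ≤ ν) (h0 : 0 ≤ lam) (h4 : 4*lam ≤ ν^2) (k : ℕ) :
    |aa ν lam k| ≤ ((k:ℝ)+1)^(mexp ν lam) := by
  induction k with
  | zero => simp [aa]
  | succ k ih =>
    set C : ℝ := 2*ν+lam with hC
    have hC0 : 0 ≤ C := by rw [hC]; linarith
    have hm : C + C^2 ≤ (mexp ν lam : ℝ) := mexp_ge hν h0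
    have hr0 : 0 < rr ν lam := rr_pos hν
    have hrν : rr ν lam ≤ ν := rr_le h0 hν
    have hQ0 : 0 ≤ (rr ν lam + 2*k)^2 + ν*(rr ν lam + 2*k) + lam := by positivity
    have hden := den_pos (ν := ν) (lam := lam) k
    have habs : |aa ν lam (k+1)| = |aa ν lam k| *
        (((rr ν lam + 2*k)^2 + ν*(rr ν lam + 2*k) + lam)
          / ((2*(k:ℝ)+2)*(2*(k:ℝ)+2 + Dd ν lam))) := by
      show |_ / _| = _
      rw [abs_div, abs_mul, abs_neg, abs_of_nonneg hQ0, abs_of_pos hden, mul_div_assoc]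
    -- key numeric bound:  Q ≤ (2k+2+C)^2  and den ≥ (2k+2)^2
    have hQle : (rr ν lam + 2*k)^2 + ν*(rr ν lam + 2*k) + lam ≤ (2*(k:ℝ)+2+C)^2 := by
      have hk0 : (0:ℝ) ≤ (k:ℝ) := Nat.cast_nonneg k
      nlinarith [hrν, hr0, hk0, hC0]
    have hdenge : (2*(k:ℝ)+2)^2 ≤ ((2*(k:ℝ)+2)*(2*(k:ℝ)+2 + Dd ν lam)) := by
      have := Dd_nonneg (ν := ν) (lam := lam)
      have hk0 : (0:ℝ) ≤ (k:ℝ) := Nat.cast_nonneg k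
      nlinarith
    -- Bernoulli:  (k+2)^m ≥ (k+1)^m (1 + m/(k+1))
    have hk1 : (0:ℝ) < (k:ℝ)+1 := by positivity
    have hbern : (1 + (mexp ν lam : ℝ) * (1/((k:ℝ)+1))) ≤ (1 + 1/((k:ℝ)+1))^(mexp ν lam) := by
      have hx0 : (0:ℝ) ≤ 1/((k:ℝ)+1) := by positivity
      have hx : (-2:ℝ) ≤ 1/((k:ℝ)+1) := by linarith
      have := one_add_mul_le_pow hx (mexp ν lam)
      linarith [this]
    have hkey : (((k:ℝ)+1)^(mexp ν lam)) * (2*(k:ℝ)+2+C)^2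
        ≤ (((k:ℝ)+2)^(mexp ν lam)) * (2*(k:ℝ)+2)^2 := by
      have h1 : ((k:ℝ)+2)^(mexp ν lam) = ((k:ℝ)+1)^(mexp ν lam) * (1 + 1/((k:ℝ)+1))^(mexp ν lam) := by
        rw [← mul_pow]; congr 1; field_simp; ring
      rw [h1]
      have hp0 : (0:ℝ) ≤ ((k:ℝ)+1)^(mexp ν lam) := by positivity
      have h2 : (2*(k:ℝ)+2+C)^2 ≤ (1 + (mexp ν lam : ℝ) * (1/((k:ℝ)+1))) * (2*(k:ℝ)+2)^2 := by
        have hk0 : (0:ℝ) ≤ (k:ℝ) := Nat.cast_nonneg k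
        have expand : (1 + (mexp ν lam : ℝ) * (1/((k:ℝ)+1))) * (2*(k:ℝ)+2)^2
            = (2*(k:ℝ)+2)^2 + (mexp ν lam : ℝ) * (4*((k:ℝ)+1)) := by
          field_simp; ring
        rw [expand]
        nlinarith [hm, hC0, hk0]
      calc ((k:ℝ)+1)^(mexp ν lam) * (2*(k:ℝ)+2+C)^2
          ≤ ((k:ℝ)+1)^(mexp ν lam) * ((1 + (mexp ν lam : ℝ) * (1/((k:ℝ)+1))) * (2*(k:ℝ)+2)^2) :=
            mul_le_mul_of_nonneg_left h2 hp0
        _ ≤ ((k:ℝ)+1)^(mexp ν lam) * ((1 + 1/((k:ℝ)+1))^(mexp ν lam) * (2*(k:ℝ)+2)^2) := by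
            have : (0:ℝ) ≤ (2*(k:ℝ)+2)^2 := by positivity
            exact mul_le_mul_of_nonneg_left (mul_le_mul_of_nonneg_right hbern this) hp0
        _ = ((k:ℝ)+1)^(mexp ν lam) * (1 + 1/((k:ℝ)+1))^(mexp ν lam) * (2*(k:ℝ)+2)^2 := by ring
    -- combine
    have h2k2 : (0:ℝ) < (2*(k:ℝ)+2)^2 := by positivity
    have goalcast : ((k+1:ℕ):ℝ) + 1 = (k:ℝ) + 2 := by push_cast; ring
    rw [habs, goalcast]
    calc |aa ν lam k| * (((rr ν lam + 2*k)^2 + ν*(rr ν lam + 2*k) + lam)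
          / ((2*(k:ℝ)+2)*(2*(k:ℝ)+2 + Dd ν lam)))
        ≤ ((k:ℝ)+1)^(mexp ν lam) * (((rr ν lam + 2*k)^2 + ν*(rr ν lam + 2*k) + lam)
          / ((2*(k:ℝ)+2)*(2*(k:ℝ)+2 + Dd ν lam))) := by
          apply mul_le_mul_of_nonneg_right ih
          positivity
      _ ≤ ((k:ℝ)+1)^(mexp ν lam) * ((2*(k:ℝ)+2+C)^2 / (2*(k:ℝ)+2)^2) := by
          apply mul_le_mul_of_nonneg_left _ (by positivity)
          exact div_le_div₀ (by positivity) hQle h2k2 hdenge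
      _ ≤ ((k:ℝ)+2)^(mexp ν lam) := by
          rw [mul_div_assoc']
          exact (div_le_iff₀ h2k2).2 hkey

end HypEig

-- Part 2: series functions, summability, derivatives
namespace HypEig
variable {ν lam : ℝ}

noncomputable def hh (ν lam : ℝ) (d : ℝ) : ℝ :=
  ∑' k : ℕ, aa ν lam k * 1 * Real.exp (-(rr ν lam + 2*k)*d)

noncomputable def hh1 (ν lam : ℝ) (d : ℝ) : ℝ :=
  ∑' k : ℕ, aa ν lam k * (-(rr ν lam + 2*k)) * Real.exp (-(rr ν lam + 2*k)*d)

noncomputable def hh2 (ν lam : ℝ) (d : ℝ) : ℝ :=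
  ∑' k : ℕ, aa ν lam k * (rr ν lam + 2*k)^2 * Real.exp (-(rr ν lam + 2*k)*d)

lemma exp_split (d : ℝ) (k : ℕ) :
    Real.exp (-(rr ν lam + 2*k)*d) = Real.exp (-(rr ν lam)*d) * Real.exp (-2*d)^k := by
  rw [← Real.exp_nat_mul, ← Real.exp_add]
  congr 1; ring

lemma summable_geom_poly (p : ℕ) {x : ℝ} (hx0 : 0 < x) (hx : x < 1) :
    Summable (fun k : ℕ => ((k:ℝ)+1)^p * x^k) := by
  have h1 : Summable (fun n : ℕ => (n:ℝ)^p * x^n) :=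
    summable_pow_mul_geometric_of_norm_lt_one p (by rwa [Real.norm_eq_abs, abs_of_pos hx0])
  have h2 : Summable (fun n : ℕ => ((n:ℝ)+1)^p * x^(n+1)) := by
    have := (summable_nat_add_iff 1).2 h1
    simpa using this
  have h3 := h2.mul_left x⁻¹
  refine h3.congr fun n => ?_
  field_simp
  ring

/-- master majorant -/
noncomputable def uu (ν lam δ : ℝ) (k : ℕ) : ℝ :=
  (2*ν+lam+2)^2 * Real.exp (-(rr ν lam)*δ) *
    (((k:ℝ)+1)^(mexp ν lam + 2) * Real.exp (-2*δ)^k)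

lemma uu_summable {δ : ℝ} (hδ : 0 < δ) : Summable (uu ν lam δ) := by
  apply Summable.mul_left
  exact summable_geom_poly _ (Real.exp_pos _) (Real.exp_lt_one_iff.2 (by linarith))

lemma term_bound (hν : 1 ≤ ν) (h0 : 0 ≤ lam) (h4 : 4*lam ≤ ν^2)
    {δ d : ℝ} (hδ : 0 < δ) (hd : δ ≤ d) (k : ℕ) {c : ℝ}
    (hc : |c| ≤ (2*ν+lam+2)^2 * ((k:ℝ)+1)^2) :
    ‖aa ν lam k * c * Real.exp (-(rr ν lam + 2*k)*d)‖ ≤ uu ν lam δ k := by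
  have hr0 : 0 < rr ν lam := rr_pos hν
  have hE : Real.exp (-(rr ν lam + 2*k)*d) ≤ Real.exp (-(rr ν lam)*δ) * Real.exp (-2*δ)^k := by
    rw [← exp_split]
    apply Real.exp_le_exp.2
    have hk0 : (0:ℝ) ≤ (k:ℝ) := Nat.cast_nonneg k
    nlinarith
  have hEpos : (0:ℝ) < Real.exp (-(rr ν lam + 2*k)*d) := Real.exp_pos _
  have haak := aa_abs hν h0 h4 k
  rw [Real.norm_eq_abs, abs_mul, abs_mul, abs_of_pos hEpos]
  calc |aa ν lam k| * |c| * Real.exp (-(rr ν lam + 2*k)*d)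
      ≤ (((k:ℝ)+1)^(mexp ν lam)) * ((2*ν+lam+2)^2 * ((k:ℝ)+1)^2) *
        (Real.exp (-(rr ν lam)*δ) * Real.exp (-2*δ)^k) := by
        apply mul_le_mul (mul_le_mul haak hc (abs_nonneg _) (by positivity)) hE (le_of_lt hEpos)
        positivity
    _ = uu ν lam δ k := by
        unfold uu
        rw [pow_add]
        ring

lemma coef_one (hν : 1 ≤ ν) (h0 : 0 ≤ lam) (k : ℕ) :
    |(1:ℝ)| ≤ (2*ν+lam+2)^2 * ((k:ℝ)+1)^2 := by
  have hk0 : (0:ℝ) ≤ (k:ℝ) := Nat.cast_nonneg k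
  rw [abs_one]; nlinarith [mul_nonneg h0 hk0, mul_nonneg hk0 hk0, sq_nonneg lam, sq_nonneg ν, mul_nonneg (mul_nonneg h0 h0) hk0, sq_nonneg (ν*(k:ℝ)), mul_nonneg (mul_nonneg hk0 hk0) h0, mul_nonneg (mul_nonneg h0 hk0) hk0, sq_nonneg (lam*(k:ℝ)), mul_nonneg hk0 (le_trans zero_le_one hν)]

lemma coef_lin (hν : 1 ≤ ν) (h0 : 0 ≤ lam) (h4 : 4*lam ≤ ν^2) (k : ℕ) :
    |(-(rr ν lam + 2*(k:ℝ)))| ≤ (2*ν+lam+2)^2 * ((k:ℝ)+1)^2 := by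
  have hk0 : (0:ℝ) ≤ (k:ℝ) := Nat.cast_nonneg k
  have hr0 : 0 < rr ν lam := rr_pos hν
  have hrν : rr ν lam ≤ ν := rr_le h0 hν
  rw [abs_neg, abs_of_pos (by positivity)]
  nlinarith [mul_nonneg h0 hk0, mul_nonneg hk0 hk0, sq_nonneg lam, sq_nonneg ν, mul_nonneg (mul_nonneg h0 h0) hk0, sq_nonneg (ν*(k:ℝ)), mul_nonneg (mul_nonneg hk0 hk0) h0, mul_nonneg (mul_nonneg h0 hk0) hk0, sq_nonneg (lam*(k:ℝ)), mul_nonneg hk0 (le_trans zero_le_one hν)]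

lemma coef_sq (hν : 1 ≤ ν) (h0 : 0 ≤ lam) (h4 : 4*lam ≤ ν^2) (k : ℕ) :
    |(rr ν lam + 2*(k:ℝ))^2| ≤ (2*ν+lam+2)^2 * ((k:ℝ)+1)^2 := by
  have hk0 : (0:ℝ) ≤ (k:ℝ) := Nat.cast_nonneg k
  have hr0 : 0 < rr ν lam := rr_pos hν
  have hrν : rr ν lam ≤ ν := rr_le h0 hν
  rw [abs_of_pos (by positivity)]
  nlinarith [mul_nonneg h0 hk0, mul_nonneg hk0 hk0, sq_nonneg lam, sq_nonneg ν, mul_nonneg (mul_nonneg h0 h0) hk0, sq_nonneg (ν*(k:ℝ)), mul_nonneg (mul_nonneg hk0 hk0) h0, mul_nonneg (mul_nonneg h0 hk0) hk0, sq_nonneg (lam*(k:ℝ)), mul_nonneg hk0 (le_trans zero_le_one hν)]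

lemma coef_Q (hν : 1 ≤ ν) (h0 : 0 ≤ lam) (h4 : 4*lam ≤ ν^2) (k : ℕ) :
    |(rr ν lam + 2*(k:ℝ))^2 + ν*(rr ν lam + 2*(k:ℝ)) + lam| ≤ (2*ν+lam+2)^2 * ((k:ℝ)+1)^2 := by
  have hk0 : (0:ℝ) ≤ (k:ℝ) := Nat.cast_nonneg k
  have hr0 : 0 < rr ν lam := rr_pos hν
  have hrν : rr ν lam ≤ ν := rr_le h0 hν
  rw [abs_of_nonneg (by positivity)]
  nlinarith [mul_nonneg h0 hk0, mul_nonneg hk0 hk0, sq_nonneg lam, sq_nonneg ν, mul_nonneg (mul_nonneg h0 h0) hk0, sq_nonneg (ν*(k:ℝ)), mul_nonneg (mul_nonneg hk0 hk0) h0, mul_nonneg (mul_nonneg h0 hk0) hk0, sq_nonneg (lam*(k:ℝ)), mul_nonneg hk0 (le_trans zero_le_one hν)]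

lemma coef_P (hν : 1 ≤ ν) (h0 : 0 ≤ lam) (h4 : 4*lam ≤ ν^2) (k : ℕ) :
    |(rr ν lam + 2*(k:ℝ))^2 - ν*(rr ν lam + 2*(k:ℝ)) + lam| ≤ (2*ν+lam+2)^2 * ((k:ℝ)+1)^2 := by
  have hk0 : (0:ℝ) ≤ (k:ℝ) := Nat.cast_nonneg k
  have hr0 : 0 < rr ν lam := rr_pos hν
  have hrν : rr ν lam ≤ ν := rr_le h0 hν
  have hP : (rr ν lam + 2*(k:ℝ))^2 - ν*(rr ν lam + 2*(k:ℝ)) + lam = (2*k) * (2*k + Dd ν lam) :=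
    P_eval h4 (2*k)
  rw [hP, abs_of_nonneg (mul_nonneg (by positivity) (add_nonneg (by positivity) Dd_nonneg))]
  have hDν : Dd ν lam ≤ ν := Dd_le h0 hν
  have hD0 : 0 ≤ Dd ν lam := Dd_nonneg
  nlinarith [mul_nonneg h0 hk0, mul_nonneg hk0 hk0, sq_nonneg lam, sq_nonneg ν, mul_nonneg (mul_nonneg h0 h0) hk0, sq_nonneg (ν*(k:ℝ)), mul_nonneg (mul_nonneg hk0 hk0) h0, mul_nonneg (mul_nonneg h0 hk0) hk0, sq_nonneg (lam*(k:ℝ)), mul_nonneg hk0 (le_trans zero_le_one hν), hDν, hD0]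

end HypEig

-- Part 3: differentiation of the series
namespace HypEig
variable {ν lam : ℝ}

lemma term_deriv (A B : ℝ) (x : ℝ) :
    HasDerivAt (fun y => A * Real.exp (B*y)) (A*B*Real.exp (B*x)) x := by
  have h := (((hasDerivAt_id x).const_mul B).exp).const_mul A
  refine h.congr_deriv ?_
  simp [id]; ring

lemma summable_series (hν : 1 ≤ ν) (h0 : 0 ≤ lam) (h4 : 4*lam ≤ ν^2)
    {d : ℝ} (hd : 0 < d) {c : ℕ → ℝ}
    (hc : ∀ k, |c k| ≤ (2*ν+lam+2)^2 * ((k:ℝ)+1)^2) :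
    Summable (fun k : ℕ => aa ν lam k * c k * Real.exp (-(rr ν lam + 2*k)*d)) :=
  Summable.of_norm_bounded (uu_summable hd)
    (fun k => term_bound hν h0 h4 hd le_rfl k (hc k))

lemma hasDerivAt_series (hν : 1 ≤ ν) (h0 : 0 ≤ lam) (h4 : 4*lam ≤ ν^2)
    {d : ℝ} (hd : 0 < d) (c c' : ℕ → ℝ)
    (hc : ∀ k, |c k| ≤ (2*ν+lam+2)^2 * ((k:ℝ)+1)^2)
    (hc' : ∀ k, |c' k| ≤ (2*ν+lam+2)^2 * ((k:ℝ)+1)^2)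
    (hrel : ∀ k, c' k = c k * (-(rr ν lam + 2*k))) :
    HasDerivAt (fun x => ∑' k : ℕ, aa ν lam k * c k * Real.exp (-(rr ν lam + 2*k)*x))
      (∑' k : ℕ, aa ν lam k * c' k * Real.exp (-(rr ν lam + 2*k)*d)) d := by
  have hδ : 0 < d/2 := by linarith
  refine hasDerivAt_of_tendstoUniformlyOn (l := (atTop : Filter (Finset ℕ)))
      (f := fun t x => ∑ k ∈ t, aa ν lam k * c k * Real.exp (-(rr ν lam + 2*k)*x))
      (f' := fun t x => ∑ k ∈ t, aa ν lam k * c' k * Real.exp (-(rr ν lam + 2*k)*x))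
      (g := fun x => ∑' k : ℕ, aa ν lam k * c k * Real.exp (-(rr ν lam + 2*k)*x))
      (g' := fun x => ∑' k : ℕ, aa ν lam k * c' k * Real.exp (-(rr ν lam + 2*k)*x))
      (isOpen_Ioi (a := d/2)) ?_ ?_ ?_ ?_
  · exact tendstoUniformlyOn_tsum (uu_summable hδ)
      (fun k x hx => term_bound hν h0 h4 hδ (le_of_lt hx) k (hc' k))
  · apply Filter.Eventually.of_forall
    intro t x _
    apply HasDerivAt.fun_sum
    intro k _
    have := term_deriv (aa ν lam k * c k) (-(rr ν lam + 2*k)) x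
    refine this.congr_deriv ?_
    rw [hrel k]; ring
  · intro x hx
    exact (Summable.of_norm_bounded (uu_summable hδ)
      (fun k => term_bound hν h0 h4 hδ (le_of_lt hx) k (hc k))).hasSum
  · show d ∈ Set.Ioi (d/2)
    simpa using by linarith

lemma hasDerivAt_hh (hν : 1 ≤ ν) (h0 : 0 ≤ lam) (h4 : 4*lam ≤ ν^2)
    {d : ℝ} (hd : 0 < d) : HasDerivAt (hh ν lam) (hh1 ν lam d) d := by
  apply hasDerivAt_series hν h0 h4 hd (fun _ => 1) (fun k => -(rr ν lam + 2*k))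
    (fun k => coef_one hν h0 k) (fun k => coef_lin hν h0 h4 k)
    (fun k => by ring)

lemma hasDerivAt_hh1 (hν : 1 ≤ ν) (h0 : 0 ≤ lam) (h4 : 4*lam ≤ ν^2)
    {d : ℝ} (hd : 0 < d) : HasDerivAt (hh1 ν lam) (hh2 ν lam d) d := by
  apply hasDerivAt_series hν h0 h4 hd (fun k => -(rr ν lam + 2*k)) (fun k => (rr ν lam + 2*k)^2)
    (fun k => coef_lin hν h0 h4 k) (fun k => coef_sq hν h0 h4 k)
    (fun k => by ring)

lemma deriv_hh (hν : 1 ≤ ν) (h0 : 0 ≤ lam) (h4 : 4*lam ≤ ν^2)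
    {d : ℝ} (hd : 0 < d) : deriv (hh ν lam) d = hh1 ν lam d :=
  (hasDerivAt_hh hν h0 h4 hd).deriv

lemma deriv_deriv_hh (hν : 1 ≤ ν) (h0 : 0 ≤ lam) (h4 : 4*lam ≤ ν^2)
    {d : ℝ} (hd : 0 < d) : deriv (deriv (hh ν lam)) d = hh2 ν lam d := by
  have hev : deriv (hh ν lam) =ᶠ[nhds d] hh1 ν lam := by
    filter_upwards [IsOpen.mem_nhds isOpen_Ioi hd] with x hx
    exact deriv_hh hν h0 h4 hx
  rw [hev.deriv_eq]
  exact (hasDerivAt_hh1 hν h0 h4 hd).deriv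

end HypEig

-- Part 4: the ODE
namespace HypEig
variable {ν lam : ℝ}

lemma tanh_mul (d : ℝ) : Real.tanh d * (1 + Real.exp (-2*d)) = 1 - Real.exp (-2*d) := by
  have hcosh : Real.cosh d ≠ 0 := ne_of_gt (Real.cosh_pos d)
  have huv : Real.exp d * Real.exp (-d) = 1 := by rw [← Real.exp_add]; simp
  have hzz : Real.exp (-2*d) = Real.exp (-d) * Real.exp (-d) := by
    rw [← Real.exp_add]; congr 1; ring
  rw [Real.tanh_eq_sinh_div_cosh, div_mul_eq_mul_div, div_eq_iff hcosh,
    Real.sinh_eq, Real.cosh_eq, hzz]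
  linear_combination (Real.exp (-d)) * huv

lemma ode_hh (hν : 1 ≤ ν) (h0 : 0 ≤ lam) (h4 : 4*lam ≤ ν^2)
    {d : ℝ} (hd : 0 < d) :
    hh2 ν lam d + ν * Real.tanh d * hh1 ν lam d = -lam * hh ν lam d := by
  have hz0 : 0 < Real.exp (-2*d) := Real.exp_pos _
  have hz1 : Real.exp (-2*d) < 1 := Real.exp_lt_one_iff.2 (by linarith)
  set z := Real.exp (-2*d) with hz
  set r := rr ν lam with hr
  have h1z : (0:ℝ) < 1 + z := by linarith
  -- summability of the pieces
  have S0 : Summable (fun k : ℕ => aa ν lam k * 1 * Real.exp (-(r + 2*k)*d)) :=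
    summable_series hν h0 h4 hd (fun k => coef_one hν h0 k)
  have S1 : Summable (fun k : ℕ => aa ν lam k * (-(r + 2*k)) * Real.exp (-(r + 2*k)*d)) :=
    summable_series hν h0 h4 hd (fun k => coef_lin hν h0 h4 k)
  have S2 : Summable (fun k : ℕ => aa ν lam k * (r + 2*k)^2 * Real.exp (-(r + 2*k)*d)) :=
    summable_series hν h0 h4 hd (fun k => coef_sq hν h0 h4 k)
  have SP : Summable (fun k : ℕ =>
      aa ν lam k * ((r + 2*k)^2 - ν*(r + 2*k) + lam) * Real.exp (-(r + 2*k)*d)) :=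
    summable_series hν h0 h4 hd (fun k => coef_P hν h0 h4 k)
  have SQz : Summable (fun k : ℕ =>
      aa ν lam k * (((r + 2*k)^2 + ν*(r + 2*k) + lam) * z) * Real.exp (-(r + 2*k)*d)) := by
    apply summable_series hν h0 h4 hd
    intro k
    rw [abs_mul]
    calc |(r + 2*k)^2 + ν*(r + 2*k) + lam| * |z|
        ≤ ((2*ν+lam+2)^2 * ((k:ℝ)+1)^2) * 1 := by
          apply mul_le_mul (coef_Q hν h0 h4 k) _ (abs_nonneg _) (by positivity)
          rw [abs_of_pos hz0]; exact le_of_lt hz1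
      _ = (2*ν+lam+2)^2 * ((k:ℝ)+1)^2 := mul_one _
  -- termwise cancellation
  have hcancel : ∀ k : ℕ,
      aa ν lam (k+1) * ((r + 2*((k:ℕ)+1:ℕ))^2 - ν*(r + 2*((k:ℕ)+1:ℕ)) + lam) *
          Real.exp (-(r + 2*((k:ℕ)+1:ℕ))*d)
        + aa ν lam k * (((r + 2*k)^2 + ν*(r + 2*k) + lam) * z) * Real.exp (-(r + 2*k)*d) = 0 := by
    intro k
    have hc : (((k:ℕ)+1:ℕ):ℝ) = (k:ℝ)+1 := by push_cast; ring
    rw [hc]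
    have hP1 : (r + 2*((k:ℝ)+1))^2 - ν*(r + 2*((k:ℝ)+1)) + lam
        = (2*(k:ℝ)+2)*((2*(k:ℝ)+2) + Dd ν lam) := by
      have := P_eval (ν := ν) (lam := lam) h4 (2*((k:ℝ)+1))
      rw [hr]; linear_combination this
    rw [hP1]
    have hEsh : Real.exp (-(r + 2*((k:ℝ)+1))*d) = Real.exp (-(r + 2*(k:ℝ))*d) * z := by
      rw [hz, ← Real.exp_add]; congr 1; ring
    rw [hEsh]
    have hrec := aa_rec (ν := ν) (lam := lam) k
    rw [hr] at *
    linear_combination (Real.exp (-(rr ν lam + 2*(k:ℝ))*d) * z) * hrec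
  -- the combined series vanishes
  have hzero : (1+z) * hh2 ν lam d + (ν*(1-z)) * hh1 ν lam d + (lam*(1+z)) * hh ν lam d = 0 := by
    unfold hh hh1 hh2
    rw [← hr, ← tsum_mul_left, ← tsum_mul_left, ← tsum_mul_left,
      ← Summable.tsum_add (S2.mul_left (1+z)) (S1.mul_left (ν*(1-z))),
      ← Summable.tsum_add ((S2.mul_left (1+z)).add (S1.mul_left (ν*(1-z)))) (S0.mul_left (lam*(1+z)))]
    have hsplit : ∀ k : ℕ,
        (1+z) * (aa ν lam k * (r + 2*k)^2 * Real.exp (-(r + 2*k)*d))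
          + (ν*(1-z)) * (aa ν lam k * (-(r + 2*k)) * Real.exp (-(r + 2*k)*d))
          + (lam*(1+z)) * (aa ν lam k * 1 * Real.exp (-(r + 2*k)*d))
        = aa ν lam k * ((r + 2*k)^2 - ν*(r + 2*k) + lam) * Real.exp (-(r + 2*k)*d)
          + aa ν lam k * (((r + 2*k)^2 + ν*(r + 2*k) + lam) * z) * Real.exp (-(r + 2*k)*d) := by
      intro k; ring
    rw [tsum_congr hsplit, Summable.tsum_add SP SQz]
    -- shift the first sum
    rw [Summable.tsum_eq_zero_add SP]
    have hfirst : aa ν lam 0 * ((r + 2*((0:ℕ):ℝ))^2 - ν*(r + 2*((0:ℕ):ℝ)) + lam) *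
        Real.exp (-(r + 2*((0:ℕ):ℝ))*d) = 0 := by
      have h00 : (r + 2*((0:ℕ):ℝ))^2 - ν*(r + 2*((0:ℕ):ℝ)) + lam = 0 := by
        have := P_eval (ν := ν) (lam := lam) h4 0
        rw [hr]; push_cast; linear_combination this
      rw [h00]; ring
    rw [hfirst, zero_add]
    rw [← Summable.tsum_add ((summable_nat_add_iff 1).2 SP) SQz]
    rw [tsum_congr hcancel]
    exact tsum_zero
  -- conclude
  have htanh : Real.tanh d = (1-z)/(1+z) := by
    rw [eq_div_iff (ne_of_gt h1z)]
    exact tanh_mul d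
  rw [htanh]
  have hne : (1:ℝ)+z ≠ 0 := ne_of_gt h1z
  field_simp
  linear_combination hzero

end HypEig

-- Part 5: tail estimates
namespace HypEig
variable {ν lam : ℝ}

lemma Ksum_summable (p : ℕ) : Summable (fun k : ℕ => ((k:ℝ)+2)^p * (1/2:ℝ)^k) := by
  have base := (summable_geom_poly p (x := (1/2:ℝ)) (by norm_num) (by norm_num)).mul_left ((2:ℝ)^p)
  refine Summable.of_nonneg_of_le (fun k => by positivity) (fun k => ?_) base
  have h1 : ((k:ℝ)+2)^p ≤ (2*((k:ℝ)+1))^p := by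
    apply pow_le_pow_left₀ (by positivity) (by linarith)
  calc ((k:ℝ)+2)^p * (1/2:ℝ)^k ≤ (2*((k:ℝ)+1))^p * (1/2:ℝ)^k := by
        apply mul_le_mul_of_nonneg_right h1 (by positivity)
    _ = (2:ℝ)^p * (((k:ℝ)+1)^p * (1/2:ℝ)^k) := by rw [mul_pow]; ring

noncomputable def KK (ν lam : ℝ) : ℝ :=
  (2*ν+lam+2) * ∑' k : ℕ, ((k:ℝ)+2)^(mexp ν lam + 1) * (1/2:ℝ)^k

lemma KK_nonneg (hν : 1 ≤ ν) (h0 : 0 ≤ lam) : 0 ≤ KK ν lam := by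
  apply mul_nonneg (by linarith)
  exact tsum_nonneg (fun k => by positivity)

lemma lin_le_sq (hν : 1 ≤ ν) (h0 : 0 ≤ lam) {c : ℝ} (k : ℕ)
    (hc : |c| ≤ (2*ν+lam+2) * ((k:ℝ)+1)) : |c| ≤ (2*ν+lam+2)^2 * ((k:ℝ)+1)^2 := by
  have hk0 : (0:ℝ) ≤ (k:ℝ) := Nat.cast_nonneg k
  nlinarith [abs_nonneg c, mul_nonneg h0 hk0, mul_nonneg hk0 hk0, sq_nonneg lam,
    mul_nonneg (mul_nonneg h0 h0) hk0, sq_nonneg (ν*(k:ℝ)), mul_nonneg (mul_nonneg hk0 hk0) h0]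

lemma tail_est (hν : 1 ≤ ν) (h0 : 0 ≤ lam) (h4 : 4*lam ≤ ν^2)
    {d : ℝ} (hd : 0 < d) (hx : Real.exp (-2*d) ≤ 1/2) {c : ℕ → ℝ}
    (hc : ∀ k, |c k| ≤ (2*ν+lam+2) * ((k:ℝ)+1)) :
    |∑' k : ℕ, aa ν lam (k+1) * c (k+1) * Real.exp (-(rr ν lam + 2*((k:ℕ)+1:ℕ))*d)|
      ≤ Real.exp (-(rr ν lam)*d) * Real.exp (-2*d) * KK ν lam := by
  have Sfull : Summable (fun k : ℕ => aa ν lam k * c k * Real.exp (-(rr ν lam + 2*k)*d)) :=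
    summable_series hν h0 h4 hd (fun k => lin_le_sq hν h0 k (hc k))
  have Stail : Summable (fun k : ℕ =>
      aa ν lam (k+1) * c (k+1) * Real.exp (-(rr ν lam + 2*((k:ℕ)+1:ℕ))*d)) :=
    (summable_nat_add_iff 1).2 Sfull
  have Smaj : Summable (fun k : ℕ =>
      (Real.exp (-(rr ν lam)*d) * Real.exp (-2*d) * (2*ν+lam+2)) *
        (((k:ℝ)+2)^(mexp ν lam + 1) * (1/2:ℝ)^k)) :=
    (Ksum_summable _).mul_left _
  have hbnd : ∀ k : ℕ,
      |aa ν lam (k+1) * c (k+1) * Real.exp (-(rr ν lam + 2*((k:ℕ)+1:ℕ))*d)|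
        ≤ (Real.exp (-(rr ν lam)*d) * Real.exp (-2*d) * (2*ν+lam+2)) *
          (((k:ℝ)+2)^(mexp ν lam + 1) * (1/2:ℝ)^k) := by
    intro k
    have ha : |aa ν lam (k+1)| ≤ ((k:ℝ)+2)^(mexp ν lam) := by
      have := aa_abs hν h0 h4 (k+1)
      have hcast : ((k+1:ℕ):ℝ) + 1 = (k:ℝ)+2 := by push_cast; ring
      rwa [hcast] at this
    have hcc : |c (k+1)| ≤ (2*ν+lam+2) * ((k:ℝ)+2) := by
      have := hc (k+1)
      have hcast : ((k+1:ℕ):ℝ) + 1 = (k:ℝ)+2 := by push_cast; ring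
      rwa [hcast] at this
    have hE : Real.exp (-(rr ν lam + 2*((k:ℕ)+1:ℕ))*d)
        = Real.exp (-(rr ν lam)*d) * Real.exp (-2*d)^(k+1) := exp_split d (k+1)
    have hpow : Real.exp (-2*d)^(k+1) ≤ Real.exp (-2*d) * (1/2:ℝ)^k := by
      rw [pow_succ']
      apply mul_le_mul_of_nonneg_left _ (le_of_lt (Real.exp_pos _))
      exact pow_le_pow_left₀ (le_of_lt (Real.exp_pos _)) hx k
    rw [abs_mul, abs_mul, hE, abs_of_pos (show (0:ℝ) < Real.exp (-(rr ν lam)*d) * Real.exp (-2*d)^(k+1) from by positivity)]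
    calc |aa ν lam (k+1)| * |c (k+1)| * (Real.exp (-(rr ν lam)*d) * Real.exp (-2*d)^(k+1))
        ≤ ((k:ℝ)+2)^(mexp ν lam) * ((2*ν+lam+2) * ((k:ℝ)+2)) *
          (Real.exp (-(rr ν lam)*d) * (Real.exp (-2*d) * (1/2:ℝ)^k)) := by
          apply mul_le_mul (mul_le_mul ha hcc (abs_nonneg _) (by positivity))
            (mul_le_mul_of_nonneg_left hpow (le_of_lt (Real.exp_pos _)))
            (by positivity) (by positivity)
      _ = (Real.exp (-(rr ν lam)*d) * Real.exp (-2*d) * (2*ν+lam+2)) *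
          (((k:ℝ)+2)^(mexp ν lam + 1) * (1/2:ℝ)^k) := by rw [pow_succ]; ring
  calc |∑' k : ℕ, aa ν lam (k+1) * c (k+1) * Real.exp (-(rr ν lam + 2*((k:ℕ)+1:ℕ))*d)|
      ≤ ∑' k : ℕ, |aa ν lam (k+1) * c (k+1) * Real.exp (-(rr ν lam + 2*((k:ℕ)+1:ℕ))*d)| := by
        have hnn := norm_tsum_le_tsum_norm
          (f := fun k : ℕ => aa ν lam (k+1) * c (k+1) * Real.exp (-(rr ν lam + 2*((k:ℕ)+1:ℕ))*d))
          (by simpa only [Real.norm_eq_abs] using Stail.abs)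
        simpa only [Real.norm_eq_abs] using hnn
    _ ≤ ∑' k : ℕ, (Real.exp (-(rr ν lam)*d) * Real.exp (-2*d) * (2*ν+lam+2)) *
          (((k:ℝ)+2)^(mexp ν lam + 1) * (1/2:ℝ)^k) := Summable.tsum_le_tsum hbnd Stail.abs Smaj
    _ = Real.exp (-(rr ν lam)*d) * Real.exp (-2*d) * KK ν lam := by
        rw [tsum_mul_left]; unfold KK; ring

noncomputable def eps (ν lam : ℝ) : ℝ :=
  min (1/2) (min (1/(2*(KK ν lam+1))) (rr ν lam/(2*(KK ν lam+1))))

noncomputable def dzero (ν lam : ℝ) : ℝ := max 1 (-Real.log (eps ν lam))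

lemma eps_pos (hν : 1 ≤ ν) (h0 : 0 ≤ lam) : 0 < eps ν lam := by
  have hK := KK_nonneg hν h0
  have hr := rr_pos (lam := lam) hν
  apply lt_min (by norm_num)
  exact lt_min (by positivity) (by positivity)

lemma dzero_ge_one : 1 ≤ dzero ν lam := le_max_left _ _

lemma exp_le_eps (hν : 1 ≤ ν) (h0 : 0 ≤ lam) {d : ℝ} (hd : dzero ν lam ≤ d) :
    Real.exp (-2*d) ≤ eps ν lam := by
  have h1 : (1:ℝ) ≤ d := le_trans dzero_ge_one hd
  have h2 : -Real.log (eps ν lam) ≤ d := le_trans (le_max_right _ _) hd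
  calc Real.exp (-2*d) ≤ Real.exp (-d) := Real.exp_le_exp.2 (by linarith)
    _ ≤ Real.exp (Real.log (eps ν lam)) := Real.exp_le_exp.2 (by linarith)
    _ = eps ν lam := Real.exp_log (eps_pos hν h0)

lemma first_term_eq (c0 : ℝ) (d : ℝ) :
    aa ν lam 0 * c0 * Real.exp (-(rr ν lam + 2*((0:ℕ):ℝ))*d) = c0 * Real.exp (-(rr ν lam)*d) := by
  have : aa ν lam 0 = 1 := rfl
  rw [this]
  norm_num

lemma hh_bounds (hν : 1 ≤ ν) (h0 : 0 ≤ lam) (h4 : 4*lam ≤ ν^2)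
    {d : ℝ} (hd : dzero ν lam ≤ d) :
    Real.exp (-(rr ν lam)*d)/2 ≤ hh ν lam d ∧ hh ν lam d ≤ 3/2 * Real.exp (-(rr ν lam)*d) := by
  have hd0 : (0:ℝ) < d := lt_of_lt_of_le (by norm_num) (le_trans dzero_ge_one hd)
  have hx := exp_le_eps hν h0 hd
  have hxhalf : Real.exp (-2*d) ≤ 1/2 := le_trans hx (min_le_left _ _)
  have hK := KK_nonneg hν h0
  have S0 : Summable (fun k : ℕ => aa ν lam k * 1 * Real.exp (-(rr ν lam + 2*k)*d)) :=
    summable_series hν h0 h4 hd0 (fun k => coef_one hν h0 k)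
  have hsplit : hh ν lam d = Real.exp (-(rr ν lam)*d)
      + ∑' k : ℕ, aa ν lam (k+1) * 1 * Real.exp (-(rr ν lam + 2*((k:ℕ)+1:ℕ))*d) := by
    unfold hh
    rw [Summable.tsum_eq_zero_add S0]
    congr 1
    have := first_term_eq (ν := ν) (lam := lam) 1 d
    simpa using this
  have htail := tail_est hν h0 h4 hd0 hxhalf (c := fun _ => 1)
    (fun k => by
      have hk0 : (0:ℝ) ≤ (k:ℝ) := Nat.cast_nonneg k
      rw [abs_one]; nlinarith)
  have hxK : Real.exp (-2*d) * KK ν lam ≤ 1/2 := by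
    have h1 : Real.exp (-2*d) ≤ 1/(2*(KK ν lam+1)) :=
      le_trans hx (le_trans (min_le_right _ _) (min_le_left _ _))
    have h2 : Real.exp (-2*d) * KK ν lam ≤ (1/(2*(KK ν lam+1))) * KK ν lam :=
      mul_le_mul_of_nonneg_right h1 hK
    have h3 : (1/(2*(KK ν lam+1))) * KK ν lam ≤ 1/2 := by
      rw [div_mul_eq_mul_div, div_le_div_iff₀ (by positivity) (by norm_num)]
      nlinarith
    linarith
  have habs : |∑' k : ℕ, aa ν lam (k+1) * 1 * Real.exp (-(rr ν lam + 2*((k:ℕ)+1:ℕ))*d)|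
      ≤ Real.exp (-(rr ν lam)*d) * (1/2) := by
    refine le_trans htail ?_
    rw [mul_assoc]
    exact mul_le_mul_of_nonneg_left hxK (le_of_lt (Real.exp_pos _))
  rw [hsplit]
  rw [abs_le] at habs
  constructor <;> [linarith [habs.1]; linarith [habs.2]]

lemma hh1_neg (hν : 1 ≤ ν) (h0 : 0 ≤ lam) (h4 : 4*lam ≤ ν^2)
    {d : ℝ} (hd : dzero ν lam ≤ d) :
    hh1 ν lam d ≤ -(rr ν lam/2) * Real.exp (-(rr ν lam)*d) := by
  have hd0 : (0:ℝ) < d := lt_of_lt_of_le (by norm_num) (le_trans dzero_ge_one hd)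
  have hx := exp_le_eps hν h0 hd
  have hxhalf : Real.exp (-2*d) ≤ 1/2 := le_trans hx (min_le_left _ _)
  have hK := KK_nonneg hν h0
  have hr0 : 0 < rr ν lam := rr_pos hν
  have hrν : rr ν lam ≤ ν := rr_le h0 hν
  have S1 : Summable (fun k : ℕ =>
      aa ν lam k * (-(rr ν lam + 2*k)) * Real.exp (-(rr ν lam + 2*k)*d)) :=
    summable_series hν h0 h4 hd0 (fun k => coef_lin hν h0 h4 k)
  have hsplit : hh1 ν lam d = -(rr ν lam) * Real.exp (-(rr ν lam)*d)
      + ∑' k : ℕ, aa ν lam (k+1) * (-(rr ν lam + 2*((k:ℕ)+1:ℕ))) *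
          Real.exp (-(rr ν lam + 2*((k:ℕ)+1:ℕ))*d) := by
    unfold hh1
    rw [Summable.tsum_eq_zero_add S1]
    congr 1
    have := first_term_eq (ν := ν) (lam := lam) (-(rr ν lam + 2*((0:ℕ):ℝ))) d
    simpa using this
  have htail := tail_est hν h0 h4 hd0 hxhalf (c := fun k => -(rr ν lam + 2*(k:ℝ)))
    (fun k => by
      have hk0 : (0:ℝ) ≤ (k:ℝ) := Nat.cast_nonneg k
      rw [abs_neg, abs_of_pos (by positivity)]
      nlinarith)
  have hxK : Real.exp (-2*d) * KK ν lam ≤ rr ν lam / 2 := by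
    have h1 : Real.exp (-2*d) ≤ rr ν lam/(2*(KK ν lam+1)) :=
      le_trans hx (le_trans (min_le_right _ _) (min_le_right _ _))
    have h2 : Real.exp (-2*d) * KK ν lam ≤ (rr ν lam/(2*(KK ν lam+1))) * KK ν lam :=
      mul_le_mul_of_nonneg_right h1 hK
    have h3 : (rr ν lam/(2*(KK ν lam+1))) * KK ν lam ≤ rr ν lam/2 := by
      rw [div_mul_eq_mul_div, div_le_div_iff₀ (by positivity) (by norm_num)]
      nlinarith
    linarith
  have habs : |∑' k : ℕ, aa ν lam (k+1) * (-(rr ν lam + 2*((k:ℕ)+1:ℕ))) *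
      Real.exp (-(rr ν lam + 2*((k:ℕ)+1:ℕ))*d)|
      ≤ Real.exp (-(rr ν lam)*d) * (rr ν lam/2) := by
    refine le_trans htail ?_
    rw [mul_assoc]
    exact mul_le_mul_of_nonneg_left hxK (le_of_lt (Real.exp_pos _))
  rw [hsplit]
  rw [abs_le] at habs
  have := habs.2
  nlinarith [Real.exp_pos (-(rr ν lam)*d)]

end HypEig


open HypEig



/-- For `λ ∈ [0, (n-1)²/4]` and `r = (n-1)/2 + (n-1)/2·√(1 - 4λ/(n-1)²)`, there exist
`d₀ > 0`, `C₃ > 0` and a solution `h` of `h'' + (n-1)·tanh(d)·h' = -λ·h` on `(0,∞)` that is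
positive and decreasing on `[d₀,∞)` and satisfies `h(d) < C₃·e^{-r d}` for all `d > d₀`. -/
theorem exists_hyperball_eigen_profile (n : ℕ) (hn : 2 ≤ n) (lam : ℝ)
    (hlam0 : 0 ≤ lam) (hlam1 : lam ≤ ((n : ℝ) - 1) ^ 2 / 4) :
    ∃ d₀ > (0:ℝ), ∃ C₃ > (0:ℝ), ∃ h : ℝ → ℝ,
      (∀ d > (0:ℝ), DifferentiableAt ℝ h d ∧ DifferentiableAt ℝ (deriv h) d ∧
        deriv (deriv h) d + ((n : ℝ) - 1) * Real.tanh d * deriv h d = -lam * h d) ∧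
      (∀ d ∈ Set.Ici d₀, 0 < h d) ∧
      AntitoneOn h (Set.Ici d₀) ∧
      (∀ d > d₀, h d < C₃ *
        Real.exp (-(((n : ℝ) - 1) / 2 +
          ((n : ℝ) - 1) / 2 * Real.sqrt (1 - 4 * lam / ((n : ℝ) - 1) ^ 2)) * d)) := by
  set ν : ℝ := (n : ℝ) - 1 with hνdef
  have hn2 : (2:ℝ) ≤ (n:ℝ) := by exact_mod_cast hn
  have hν : 1 ≤ ν := by rw [hνdef]; linarith
  have h4 : 4*lam ≤ ν^2 := by rw [hνdef]; nlinarith [hlam1]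
  have hν0 : 0 < ν := by linarith
  -- the exponent in the statement equals rr ν lam
  have hRr : ν / 2 + ν / 2 * Real.sqrt (1 - 4 * lam / ν ^ 2) = rr ν lam := by
    have h1 : 1 - 4 * lam / ν ^ 2 = (ν^2 - 4*lam) / ν^2 := by field_simp
    rw [h1, Real.sqrt_div (by nlinarith) (ν^2), Real.sqrt_sq (le_of_lt hν0)]
    unfold rr Dd
    field_simp
  refine ⟨dzero ν lam, lt_of_lt_of_le one_pos dzero_ge_one, 2, by norm_num, hh ν lam, ?_, ?_, ?_, ?_⟩
  · -- ODE
    intro d hd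
    have hev : deriv (hh ν lam) =ᶠ[nhds d] hh1 ν lam := by
      filter_upwards [IsOpen.mem_nhds isOpen_Ioi hd] with x hx
      exact deriv_hh hν hlam0 h4 hx
    refine ⟨(hasDerivAt_hh hν hlam0 h4 hd).differentiableAt, ?_, ?_⟩
    · rw [hev.differentiableAt_iff]
      exact (hasDerivAt_hh1 hν hlam0 h4 hd).differentiableAt
    · rw [deriv_deriv_hh hν hlam0 h4 hd, deriv_hh hν hlam0 h4 hd]
      exact ode_hh hν hlam0 h4 hd
  · -- positivity
    intro d hd
    have := (hh_bounds hν hlam0 h4 hd).1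
    have hE : 0 < Real.exp (-(rr ν lam)*d) := Real.exp_pos _
    linarith
  · -- antitone
    apply antitoneOn_of_deriv_nonpos (convex_Ici _)
    · intro d hd
      have hd0 : (0:ℝ) < d := lt_of_lt_of_le (by norm_num) (le_trans dzero_ge_one hd)
      exact (hasDerivAt_hh hν hlam0 h4 hd0).continuousAt.continuousWithinAt
    · rw [interior_Ici]
      intro d hd
      have hd0 : (0:ℝ) < d :=
        lt_trans (lt_of_lt_of_le (by norm_num) dzero_ge_one) hd
      exact (hasDerivAt_hh hν hlam0 h4 hd0).differentiableAt.differentiableWithinAt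
    · rw [interior_Ici]
      intro d hd
      have hd0 : (0:ℝ) < d :=
        lt_trans (lt_of_lt_of_le (by norm_num) dzero_ge_one) hd
      rw [deriv_hh hν hlam0 h4 hd0]
      have := hh1_neg hν hlam0 h4 (le_of_lt hd)
      have hr0 : 0 < rr ν lam := rr_pos hν
      nlinarith [Real.exp_pos (-(rr ν lam)*d)]
  · -- upper bound
    intro d hd
    rw [hRr]
    have := (hh_bounds hν hlam0 h4 (le_of_lt hd)).2
    have hE : 0 < Real.exp (-(rr ν lam)*d) := Real.exp_pos _
    nlinarith
end

section
/- Let s ∈ ((n-1)/2, n-1) and Λ ⊂ ∂B (sphere in ℝ^n) be a set with H^s(Λ) < ∞ admitting a constant K > 0 such that H^s(Λ ∩ B_r(p)) ≤ K·r^s for all p ∈ Λ and r > 0. Then there is a constant M depending only on n and s such that for every x in the open unit ball B, ∫_Λ ((1-|x|²)/|z-x|²)^{(n-1)/2}·|ln((1-|x|²)/|z-x|²)| dH^s(z) ≤ M·K. Moreover the integral is bounded by K₁·δ^{s-(n-1)/2}·ln(128/δ³) where δ = 1-|x| and K₁ depends only on n, s, K. -/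
open MeasureTheory Metric

private lemma rpow_log_aux (b δ : ℝ) (hb : 0 < b) (hδ : 0 < δ) (hδ1 : δ ≤ 1) :
    δ ^ b * Real.log (128 / δ ^ 3) ≤ Real.log 128 + 3 / b := by
  have hu : 0 < δ ^ b := Real.rpow_pos_of_pos hδ b
  have hu1 : δ ^ b ≤ 1 := Real.rpow_le_one hδ.le hδ1 hb.le
  have hlog : Real.log (128 / δ ^ 3) = Real.log 128 - 3 * Real.log δ := by
    rw [Real.log_div (by norm_num) (by positivity), Real.log_pow]
    push_cast; ring
  have h1 : δ ^ b * Real.log 128 ≤ Real.log 128 := by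
    nlinarith [Real.log_nonneg (by norm_num : (1:ℝ) ≤ 128)]
  have h2 : δ ^ b * (-(3 * Real.log δ)) ≤ 3 / b := by
    have hlogu : Real.log (δ ^ b) = b * Real.log δ := Real.log_rpow hδ b
    have hle : Real.log ((δ ^ b)⁻¹) ≤ (δ ^ b)⁻¹ - 1 :=
      Real.log_le_sub_one_of_pos (by positivity)
    rw [Real.log_inv, hlogu] at hle
    have h3 : δ ^ b * (-(b * Real.log δ)) ≤ 1 - δ ^ b := by
      have := mul_le_mul_of_nonneg_left hle hu.le
      calc δ ^ b * (-(b * Real.log δ)) ≤ δ ^ b * ((δ ^ b)⁻¹ - 1) := this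
        _ = 1 - δ ^ b := by field_simp
    have h4 : δ ^ b * (-Real.log δ) ≤ 1 / b := by
      rw [le_div_iff₀ hb]; nlinarith
    calc δ ^ b * (-(3 * Real.log δ)) = 3 * (δ ^ b * (-Real.log δ)) := by ring
      _ ≤ 3 * (1 / b) := by linarith
      _ = 3 / b := by ring
  calc δ ^ b * Real.log (128 / δ ^ 3)
      = δ ^ b * Real.log 128 + δ ^ b * (-(3 * Real.log δ)) := by rw [hlog]; ring
    _ ≤ Real.log 128 + 3 / b := add_le_add h1 h2

set_option maxHeartbeats 2000000 in
/-- For `s ∈ ((n-1)/2, n-1)` and `Λ ⊂ ∂B` with finite `H^s` measure satisfying the Ahlfors-type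
upper bound `H^s(Λ ∩ B_r(p)) ≤ K r^s`, the integral
`∫_Λ ((1-|x|²)/|z-x|²)^{(n-1)/2} |ln((1-|x|²)/|z-x|²)| dH^s(z)` is at most `M·K` for all `x ∈ B`,
with `M = M(n,s)`; moreover it is bounded by `K₁·K·δ^{s-(n-1)/2}·ln(128/δ³)` with `δ = 1-|x|`
and `K₁ = K₁(n,s)`. -/
theorem hausdorff_integral_bound (n : ℕ) (hn : 2 ≤ n) (s : ℝ)
    (hs1 : ((n : ℝ) - 1) / 2 < s) (hs2 : s < (n : ℝ) - 1) :
    ∃ M > (0:ℝ), ∃ K₁ > (0:ℝ),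
      ∀ (Λ : Set (EuclideanSpace ℝ (Fin n))) (K : ℝ), 0 < K →
        Λ ⊆ sphere (0 : EuclideanSpace ℝ (Fin n)) 1 →
        μH[s] Λ < ⊤ →
        (∀ p ∈ Λ, ∀ r > (0:ℝ), μH[s] (Λ ∩ ball p r) ≤ ENNReal.ofReal (K * r ^ s)) →
        ∀ x : EuclideanSpace ℝ (Fin n), ‖x‖ < 1 →
          (∫ z in Λ, ((1 - ‖x‖ ^ 2) / ‖z - x‖ ^ 2) ^ (((n : ℝ) - 1) / 2) *
              |Real.log ((1 - ‖x‖ ^ 2) / ‖z - x‖ ^ 2)| ∂μH[s]) ≤ M * K ∧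
          (∫ z in Λ, ((1 - ‖x‖ ^ 2) / ‖z - x‖ ^ 2) ^ (((n : ℝ) - 1) / 2) *
              |Real.log ((1 - ‖x‖ ^ 2) / ‖z - x‖ ^ 2)| ∂μH[s]) ≤
            K₁ * K * (1 - ‖x‖) ^ (s - ((n : ℝ) - 1) / 2) *
              Real.log (128 / (1 - ‖x‖) ^ 3) := by
  have hn2 : (2:ℝ) ≤ (n:ℝ) := by exact_mod_cast hn
  set a : ℝ := ((n : ℝ) - 1) / 2 with ha_def
  have ha : 0 < a := by rw [ha_def]; linarith
  have hba : 0 < s - a := by linarith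
  have hs2a : s - 2 * a < 0 := by rw [ha_def]; linarith
  set r₀ : ℝ := (2:ℝ) ^ (s - 2 * a) with hr₀_def
  have hr₀pos : 0 < r₀ := Real.rpow_pos_of_pos two_pos _
  have hr₀lt : r₀ < 1 := Real.rpow_lt_one_of_one_lt_of_neg one_lt_two hs2a
  set C₂ : ℝ := (1 - r₀)⁻¹ with hC₂_def
  have hC₂pos : 0 < C₂ := by rw [hC₂_def]; exact inv_pos.2 (by linarith)
  set K₁ : ℝ := (2:ℝ) ^ (a + 2 * s) * C₂ with hK₁_def
  have hK₁pos : 0 < K₁ := mul_pos (Real.rpow_pos_of_pos two_pos _) hC₂pos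
  have hlog128 : 0 < Real.log 128 := Real.log_pos (by norm_num)
  set M : ℝ := K₁ * (Real.log 128 + 3 / (s - a)) with hM_def
  have hMpos : 0 < M := mul_pos hK₁pos (by positivity)
  refine ⟨M, hMpos, K₁, hK₁pos, ?_⟩
  intro Λ K hK hsub hfin hAhl x hx
  set δ : ℝ := 1 - ‖x‖ with hδ_def
  have hδpos : 0 < δ := by rw [hδ_def]; linarith
  have hδ1 : δ ≤ 1 := by have := norm_nonneg x; rw [hδ_def]; linarith
  set c : ℝ := 1 - ‖x‖ ^ 2 with hc_def
  have hcδ : δ ≤ c := by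
    have h0 := norm_nonneg x
    rw [hδ_def, hc_def]; nlinarith
  have hc2δ : c ≤ 2 * δ := by
    have h0 := norm_nonneg x
    rw [hδ_def, hc_def]; nlinarith
  have hcpos : 0 < c := lt_of_lt_of_le hδpos hcδ
  set f : EuclideanSpace ℝ (Fin n) → ℝ :=
    fun z => (c / ‖z - x‖ ^ 2) ^ a * |Real.log (c / ‖z - x‖ ^ 2)| with hf_def
  have hf_nonneg : ∀ z, 0 ≤ f z := fun z =>
    mul_nonneg (Real.rpow_nonneg (by positivity) _) (abs_nonneg _)
  have hf_meas : Measurable f := by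
    rw [hf_def]; measurability
  have hz1 : ∀ z ∈ Λ, ‖z‖ = 1 := fun z hz => mem_sphere_zero_iff_norm.1 (hsub hz)
  set L : ℝ := Real.log (4 / δ) with hL_def
  have h4δ : (1:ℝ) < 4 / δ := by rw [lt_div_iff₀ hδpos]; linarith
  have hLpos : 0 < L := Real.log_pos h4δ
  set D : ℝ := (2:ℝ) ^ (a + 2 * s) * δ ^ (s - a) * L * K with hD_def
  have hDpos : 0 < D := by
    have h5 := Real.rpow_pos_of_pos two_pos (a + 2 * s)
    have h6 := Real.rpow_pos_of_pos hδpos (s - a)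
    positivity
  set A : ℕ → Set (EuclideanSpace ℝ (Fin n)) :=
    fun j => ball x ((2:ℝ) ^ ((j:ℝ) + 1) * δ) \ ball x ((2:ℝ) ^ (j:ℝ) * δ) with hA_def
  have hAmeas : ∀ j, MeasurableSet (A j) :=
    fun j => measurableSet_ball.diff measurableSet_ball
  have hball_null : (μH[s]).restrict Λ (ball x δ) = 0 := by
    rw [Measure.restrict_apply measurableSet_ball]
    have he : ball x δ ∩ Λ = ∅ := by
      rw [Set.eq_empty_iff_forall_notMem]
      rintro z ⟨hzb, hzΛ⟩
      have h1 : ‖z - x‖ < δ := by rwa [mem_ball, dist_eq_norm] at hzb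
      have h2 : ‖z‖ - ‖x‖ ≤ ‖z - x‖ := norm_sub_norm_le z x
      rw [hz1 z hzΛ] at h2
      rw [hδ_def] at h1; linarith
    rw [he, measure_empty]
  have hcover : ∀ z, z ∉ ball x δ → z ∈ ⋃ j, A j := by
    intro z hz
    have hd : δ ≤ dist z x := not_lt.1 (fun h => hz (mem_ball.2 h))
    set y : ℝ := dist z x / δ with hy_def
    have hy1 : 1 ≤ y := (le_div_iff₀ hδpos).2 (by linarith)
    have hypos : 0 < y := lt_of_lt_of_le one_pos hy1
    set j : ℕ := ⌊Real.logb 2 y⌋₊ with hj_def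
    have hlb0 : 0 ≤ Real.logb 2 y := Real.logb_nonneg one_lt_two hy1
    have hfl : (j:ℝ) ≤ Real.logb 2 y := Nat.floor_le hlb0
    have hfl2 : Real.logb 2 y < (j:ℝ) + 1 := Nat.lt_floor_add_one _
    have h2l : (2:ℝ) ^ Real.logb 2 y = y := Real.rpow_logb two_pos (by norm_num) hypos
    have hlow : (2:ℝ) ^ (j:ℝ) ≤ y := by
      calc (2:ℝ) ^ (j:ℝ) ≤ (2:ℝ) ^ Real.logb 2 y :=
            Real.rpow_le_rpow_of_exponent_le one_le_two hfl
        _ = y := h2l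
    have hhigh : y < (2:ℝ) ^ ((j:ℝ) + 1) := by
      calc y = (2:ℝ) ^ Real.logb 2 y := h2l.symm
        _ < (2:ℝ) ^ ((j:ℝ) + 1) := Real.rpow_lt_rpow_of_exponent_lt one_lt_two hfl2
    refine Set.mem_iUnion.2 ⟨j, ?_, ?_⟩
    · have := (div_lt_iff₀ hδpos).1 hhigh
      exact mem_ball.2 (by linarith)
    · intro hmem
      have h5 := mem_ball.1 hmem
      have h6 := (le_div_iff₀ hδpos).1 hlow
      linarith
  have hannulus : ∀ j : ℕ, (∫⁻ z in A j, ENNReal.ofReal (f z) ∂((μH[s]).restrict Λ))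
      ≤ ENNReal.ofReal (D * r₀ ^ j) := by
    intro j
    set S : Set (EuclideanSpace ℝ (Fin n)) := A j ∩ closedBall x 2 with hS_def
    have hSmeas : MeasurableSet S := (hAmeas j).inter measurableSet_closedBall
    have hdiff_null : (μH[s]).restrict Λ (A j \ S) = 0 := by
      rw [Measure.restrict_apply ((hAmeas j).diff hSmeas)]
      have he : (A j \ S) ∩ Λ = ∅ := by
        rw [Set.eq_empty_iff_forall_notMem]
        rintro z ⟨⟨hzA, hzS⟩, hzΛ⟩
        apply hzS
        refine ⟨hzA, ?_⟩
        rw [mem_closedBall, dist_eq_norm]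
        have h2 : ‖z - x‖ ≤ ‖z‖ + ‖x‖ := norm_sub_le z x
        rw [hz1 z hzΛ] at h2
        linarith
      rw [he, measure_empty]
    have hAS : A j =ᵐ[(μH[s]).restrict Λ] S := by
      rw [MeasureTheory.ae_eq_set]
      refine ⟨hdiff_null, ?_⟩
      have he : S \ A j = ∅ := Set.diff_eq_empty.2 Set.inter_subset_left
      rw [he, measure_empty]
    rw [setLIntegral_congr hAS]
    set Tj : ℝ := ((2:ℝ) ^ (1 - 2 * (j:ℝ)) * δ⁻¹) ^ a with hTj_def
    have hTjpos : 0 < Tj :=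
      Real.rpow_pos_of_pos (mul_pos (Real.rpow_pos_of_pos two_pos _) (inv_pos.2 hδpos)) _
    -- pointwise bound on S
    have hpt : ∀ z ∈ S, f z ≤ Tj * L := by
      rintro z ⟨⟨hzball, hznball⟩, hzcb⟩
      have hd_up : ‖z - x‖ < (2:ℝ) ^ ((j:ℝ) + 1) * δ := by
        rwa [mem_ball, dist_eq_norm] at hzball
      have hd_lo : (2:ℝ) ^ (j:ℝ) * δ ≤ ‖z - x‖ := by
        rw [mem_ball, dist_eq_norm] at hznball
        exact not_lt.1 hznball
      have h2j1 : (1:ℝ) ≤ (2:ℝ) ^ (j:ℝ) := by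
        calc (1:ℝ) = (2:ℝ) ^ (0:ℝ) := (Real.rpow_zero 2).symm
          _ ≤ (2:ℝ) ^ (j:ℝ) := Real.rpow_le_rpow_of_exponent_le one_le_two (Nat.cast_nonneg j)
      have hdpos : 0 < ‖z - x‖ := lt_of_lt_of_le (by nlinarith) hd_lo
      have hd2 : ‖z - x‖ ≤ 2 := by rwa [mem_closedBall, dist_eq_norm] at hzcb
      set t : ℝ := c / ‖z - x‖ ^ 2 with ht_def
      have htpos : 0 < t := div_pos hcpos (by positivity)
      have hsq : ((2:ℝ) ^ (j:ℝ) * δ) ^ 2 ≤ ‖z - x‖ ^ 2 :=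
        pow_le_pow_left₀ (by positivity) hd_lo 2
      have heq : 2 * δ / (((2:ℝ) ^ (j:ℝ) * δ) ^ 2) = (2:ℝ) ^ (1 - 2 * (j:ℝ)) * δ⁻¹ := by
        have hpow : ((2:ℝ) ^ (j:ℝ)) ^ (2:ℕ) = (2:ℝ) ^ (2 * (j:ℝ)) := by
          rw [← Real.rpow_natCast ((2:ℝ) ^ (j:ℝ)) 2,
            ← Real.rpow_mul (by norm_num : (0:ℝ) ≤ 2)]
          norm_num [mul_comm]
        have h2ne : (2:ℝ) ^ (2 * (j:ℝ)) ≠ 0 := ne_of_gt (Real.rpow_pos_of_pos two_pos _)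
        rw [mul_pow, hpow, Real.rpow_sub two_pos, Real.rpow_one]
        field_simp
      have ht_up : t ≤ (2:ℝ) ^ (1 - 2 * (j:ℝ)) * δ⁻¹ := by
        rw [← heq]
        exact div_le_div₀ (by linarith) hc2δ (by positivity) hsq
      have ht_lo : δ / 4 ≤ t := by
        exact div_le_div₀ hcpos.le hcδ (by positivity) (by nlinarith)
      have ht_up4 : t ≤ 4 / δ := by
        have h1 : (2:ℝ) ^ (1 - 2 * (j:ℝ)) ≤ (2:ℝ) ^ (1:ℝ) :=
          Real.rpow_le_rpow_of_exponent_le one_le_two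
            (by have := Nat.cast_nonneg (α := ℝ) j; linarith)
        have h2 : (2:ℝ) ^ (1 - 2 * (j:ℝ)) ≤ 2 := h1.trans_eq (Real.rpow_one 2)
        calc t ≤ (2:ℝ) ^ (1 - 2 * (j:ℝ)) * δ⁻¹ := ht_up
          _ ≤ 2 * δ⁻¹ := mul_le_mul_of_nonneg_right h2 (by positivity)
          _ ≤ 4 / δ := by rw [div_eq_mul_inv]; gcongr; norm_num
      have habs : |Real.log t| ≤ L := by
        rw [abs_le]
        constructor
        · have hneg : -L = Real.log (δ / 4) := by
            rw [hL_def, ← Real.log_inv, inv_div]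
          rw [hneg]
          exact Real.log_le_log (by positivity) ht_lo
        · rw [hL_def]
          exact Real.log_le_log htpos ht_up4
      calc f z = t ^ a * |Real.log t| := rfl
        _ ≤ Tj * L :=
            mul_le_mul (Real.rpow_le_rpow htpos.le ht_up ha.le) habs (abs_nonneg _) hTjpos.le
    -- measure bound on S
    have hmeasS : (μH[s]).restrict Λ S ≤ ENNReal.ofReal (K * ((2:ℝ) ^ ((j:ℝ) + 2) * δ) ^ s) := by
      rw [Measure.restrict_apply hSmeas]
      rcases (S ∩ Λ).eq_empty_or_nonempty with he | ⟨p, hpS, hpΛ⟩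
      · rw [he, measure_empty]; exact zero_le
      · have hr : (0:ℝ) < (2:ℝ) ^ ((j:ℝ) + 2) * δ := by positivity
        refine le_trans (measure_mono ?_) (hAhl p hpΛ _ hr)
        rintro q ⟨hqS, hqΛ⟩
        refine ⟨hqΛ, ?_⟩
        rw [mem_ball]
        have h1 : dist q x < (2:ℝ) ^ ((j:ℝ) + 1) * δ := mem_ball.1 hqS.1.1
        have h2 : dist p x < (2:ℝ) ^ ((j:ℝ) + 1) * δ := mem_ball.1 hpS.1.1
        have h3 : dist q p ≤ dist q x + dist p x := dist_triangle_right q p x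
        have h4 : (2:ℝ) ^ ((j:ℝ) + 2) = 2 * (2:ℝ) ^ ((j:ℝ) + 1) := by
          rw [show (j:ℝ) + 2 = 1 + ((j:ℝ) + 1) by ring, Real.rpow_add two_pos, Real.rpow_one]
        rw [h4]; linarith
    -- algebra
    have halg : Tj * L * (K * ((2:ℝ) ^ ((j:ℝ) + 2) * δ) ^ s) = D * r₀ ^ j := by
      have e2 : ∀ u v : ℝ, (2:ℝ) ^ u * (2:ℝ) ^ v = (2:ℝ) ^ (u + v) :=
        fun u v => (Real.rpow_add two_pos u v).symm
      have hTj' : Tj = (2:ℝ) ^ ((1 - 2 * (j:ℝ)) * a) * (δ ^ a)⁻¹ := by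
        rw [hTj_def, Real.mul_rpow (by positivity) (by positivity),
          ← Real.rpow_mul (by norm_num : (0:ℝ) ≤ 2), Real.inv_rpow hδpos.le]
      have hrs : ((2:ℝ) ^ ((j:ℝ) + 2) * δ) ^ s = (2:ℝ) ^ (((j:ℝ) + 2) * s) * δ ^ s := by
        rw [Real.mul_rpow (by positivity) hδpos.le,
          ← Real.rpow_mul (by norm_num : (0:ℝ) ≤ 2)]
      have hr0j : r₀ ^ j = (2:ℝ) ^ ((s - 2 * a) * (j:ℝ)) := by
        rw [hr₀_def, ← Real.rpow_natCast ((2:ℝ) ^ (s - 2 * a)) j,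
          ← Real.rpow_mul (by norm_num : (0:ℝ) ≤ 2)]
      have hδs : δ ^ (s - a) = δ ^ s * (δ ^ a)⁻¹ := by
        rw [Real.rpow_sub hδpos, div_eq_mul_inv]
      rw [hTj', hrs, hr0j, hD_def, hδs]
      calc (2:ℝ) ^ ((1 - 2 * (j:ℝ)) * a) * (δ ^ a)⁻¹ * L *
            (K * ((2:ℝ) ^ (((j:ℝ) + 2) * s) * δ ^ s))
          = ((2:ℝ) ^ ((1 - 2 * (j:ℝ)) * a) * (2:ℝ) ^ (((j:ℝ) + 2) * s)) *
            ((δ ^ a)⁻¹ * δ ^ s * L * K) := by ring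
        _ = (2:ℝ) ^ ((1 - 2 * (j:ℝ)) * a + ((j:ℝ) + 2) * s) *
            ((δ ^ a)⁻¹ * δ ^ s * L * K) := by rw [e2]
        _ = (2:ℝ) ^ ((a + 2 * s) + (s - 2 * a) * (j:ℝ)) *
            ((δ ^ a)⁻¹ * δ ^ s * L * K) := by
            rw [show (1 - 2 * (j:ℝ)) * a + ((j:ℝ) + 2) * s
              = (a + 2 * s) + (s - 2 * a) * (j:ℝ) from by ring]
        _ = ((2:ℝ) ^ (a + 2 * s) * (2:ℝ) ^ ((s - 2 * a) * (j:ℝ))) *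
            ((δ ^ a)⁻¹ * δ ^ s * L * K) := by rw [e2]
        _ = (2:ℝ) ^ (a + 2 * s) * (δ ^ s * (δ ^ a)⁻¹) * L * K *
            (2:ℝ) ^ ((s - 2 * a) * (j:ℝ)) := by ring
    calc (∫⁻ z in S, ENNReal.ofReal (f z) ∂((μH[s]).restrict Λ))
        ≤ ∫⁻ _ in S, ENNReal.ofReal (Tj * L) ∂((μH[s]).restrict Λ) :=
          setLIntegral_mono' hSmeas (fun z hz => ENNReal.ofReal_le_ofReal (hpt z hz))
      _ = ENNReal.ofReal (Tj * L) * (μH[s]).restrict Λ S := setLIntegral_const _ _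
      _ ≤ ENNReal.ofReal (Tj * L) *
            ENNReal.ofReal (K * ((2:ℝ) ^ ((j:ℝ) + 2) * δ) ^ s) := by gcongr
      _ = ENNReal.ofReal (Tj * L * (K * ((2:ℝ) ^ ((j:ℝ) + 2) * δ) ^ s)) :=
          (ENNReal.ofReal_mul (by positivity)).symm
      _ = ENNReal.ofReal (D * r₀ ^ j) := by rw [halg]
  -- assemble
  have hkey : (∫⁻ z, ENNReal.ofReal (f z) ∂((μH[s]).restrict Λ))
      ≤ ENNReal.ofReal (D * C₂) := by
    calc (∫⁻ z, ENNReal.ofReal (f z) ∂((μH[s]).restrict Λ))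
        = ∫⁻ z in Set.univ, ENNReal.ofReal (f z) ∂((μH[s]).restrict Λ) :=
          (setLIntegral_univ _).symm
      _ ≤ ∫⁻ z in ball x δ ∪ ⋃ j, A j, ENNReal.ofReal (f z) ∂((μH[s]).restrict Λ) := by
          apply lintegral_mono_set
          intro z _
          by_cases hz : z ∈ ball x δ
          · exact Or.inl hz
          · exact Or.inr (hcover z hz)
      _ ≤ (∫⁻ z in ball x δ, ENNReal.ofReal (f z) ∂((μH[s]).restrict Λ)) +
            ∫⁻ z in ⋃ j, A j, ENNReal.ofReal (f z) ∂((μH[s]).restrict Λ) := by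
          refine le_trans (lintegral_mono' (Measure.restrict_union_le _ _) le_rfl) ?_
          rw [lintegral_add_measure]
      _ ≤ 0 + ∑' j, ∫⁻ z in A j, ENNReal.ofReal (f z) ∂((μH[s]).restrict Λ) :=
          add_le_add (le_of_eq (setLIntegral_measure_zero _ _ hball_null))
            (lintegral_iUnion_le _ _)
      _ ≤ 0 + ∑' j, ENNReal.ofReal (D * r₀ ^ j) :=
          add_le_add le_rfl (ENNReal.tsum_le_tsum hannulus)
      _ = ENNReal.ofReal D * ∑' j, ENNReal.ofReal r₀ ^ j := by
          rw [zero_add]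
          simp_rw [ENNReal.ofReal_mul hDpos.le, ENNReal.ofReal_pow hr₀pos.le]
          rw [ENNReal.tsum_mul_left]
      _ = ENNReal.ofReal D * ENNReal.ofReal C₂ := by
          rw [ENNReal.tsum_geometric]
          congr 1
          rw [hC₂_def, ENNReal.ofReal_inv_of_pos (by linarith),
            ENNReal.ofReal_sub _ hr₀pos.le, ENNReal.ofReal_one]
      _ = ENNReal.ofReal (D * C₂) := (ENNReal.ofReal_mul hDpos.le).symm
  have hnu_eq : (∫ z in Λ, f z ∂μH[s])
      = (∫⁻ z, ENNReal.ofReal (f z) ∂((μH[s]).restrict Λ)).toReal :=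
    integral_eq_lintegral_of_nonneg_ae (ae_of_all _ hf_nonneg)
      hf_meas.aestronglyMeasurable
  have hbound2 : (∫ z in Λ, f z ∂μH[s]) ≤ D * C₂ := by
    rw [hnu_eq]
    exact ENNReal.toReal_le_of_le_ofReal (by positivity) hkey
  have hDC : D * C₂ = K₁ * K * δ ^ (s - a) * L := by rw [hD_def, hK₁_def]; ring
  have hL_le : L ≤ Real.log (128 / δ ^ 3) := by
    rw [hL_def]
    apply Real.log_le_log (by positivity)
    rw [div_le_div_iff₀ hδpos (by positivity)]
    have h9 : δ ^ 3 ≤ δ := by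
      calc δ ^ 3 = δ * δ ^ 2 := by ring
        _ ≤ δ * 1 := mul_le_mul_of_nonneg_left (by nlinarith) hδpos.le
        _ = δ := mul_one δ
    linarith
  have hB : (∫ z in Λ, f z ∂μH[s])
      ≤ K₁ * K * δ ^ (s - a) * Real.log (128 / δ ^ 3) := by
    rw [hDC] at hbound2
    refine hbound2.trans ?_
    have h7 : 0 ≤ K₁ * K * δ ^ (s - a) := by positivity
    exact mul_le_mul_of_nonneg_left hL_le h7
  constructor
  · refine hB.trans ?_
    have h5 := rpow_log_aux (s - a) δ hba hδpos hδ1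
    calc K₁ * K * δ ^ (s - a) * Real.log (128 / δ ^ 3)
        = (K₁ * K) * (δ ^ (s - a) * Real.log (128 / δ ^ 3)) := by ring
      _ ≤ (K₁ * K) * (Real.log 128 + 3 / (s - a)) :=
          mul_le_mul_of_nonneg_left h5 (by positivity)
      _ = M * K := by rw [hM_def]; ring
  · exact hB
end
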